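/- arXiv:2012.08069 — 2 statements merged into one kernel-verified Lean document; each statement's English description precedes it below -/
import Mathlib

section
/- Let h ∈ ℂ with Im h > 0, μ ∈ ℝ with μ ≠ Re h, and ξ = (μ·Re h - |h|²)/(μ - Re h). For m ∈ ℂ, define V_μ(m) = ((m + μ)·Im h)/((μ - Re h)·m + μ·Re h - |h|²) and similarly V_ξ(m) = ((m + ξ)·Im h)/((ξ - Re h)·m + ξ·Re h - |h|²). Then whenever all denominators are nonzero, V_μ(m) = -1/V_ξ(m). -/
open Complex

theorem stmt6 (h : ℂ) (him : 0 < h.im) (μ : ℝ) (hμ : μ ≠ h.re)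
    (m : ℂ) :
    let ξ : ℝ := (μ * h.re - ‖h‖ ^ 2) / (μ - h.re)
    let Vμ : ℂ := ((m + (μ : ℂ)) * (h.im : ℂ)) /
      (((μ : ℂ) - (h.re : ℂ)) * m + (μ : ℂ) * (h.re : ℂ) - (‖h‖ ^ 2 : ℝ))
    let Vξ : ℂ := ((m + (ξ : ℂ)) * (h.im : ℂ)) /
      (((ξ : ℂ) - (h.re : ℂ)) * m + (ξ : ℂ) * (h.re : ℂ) - (‖h‖ ^ 2 : ℝ))
    (((μ : ℂ) - (h.re : ℂ)) * m + (μ : ℂ) * (h.re : ℂ) - (‖h‖ ^ 2 : ℝ)) ≠ 0 →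
    (((ξ : ℂ) - (h.re : ℂ)) * m + (ξ : ℂ) * (h.re : ℂ) - (‖h‖ ^ 2 : ℝ)) ≠ 0 →
    Vξ ≠ 0 →
    Vμ = -1 / Vξ := by
  intro ξ Vμ Vξ hd1 hd2 hV
  have hμr : (μ : ℝ) - h.re ≠ 0 := sub_ne_zero.mpr hμ
  have hur : ((μ : ℂ) - (h.re : ℂ)) ≠ 0 := by
    intro h0
    apply hμr
    have := congrArg Complex.re h0
    simpa using this
  have hr : (ξ : ℝ) * (μ - h.re) = μ * h.re - ‖h‖ ^ 2 := by
    exact div_mul_cancel₀ _ hμr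
  have hξ := congrArg (fun x : ℝ => (x : ℂ)) hr
  push_cast at hξ
  have habs : ((‖h‖ : ℂ)) ^ 2 = (h.re : ℂ) ^ 2 + (h.im : ℂ) ^ 2 := by
    have hs := Complex.sq_norm h
    rw [Complex.normSq_apply] at hs
    have hc := congrArg (fun x : ℝ => (x : ℂ)) hs
    push_cast at hc
    linear_combination hc
  rw [eq_div_iff hV]
  simp only [Vμ, Vξ]
  push_cast at hd1 hd2 ⊢
  have key1 : (m + (ξ : ℂ)) * ((μ : ℂ) - (h.re : ℂ)) =
      ((μ : ℂ) - (h.re : ℂ)) * m + (μ : ℂ) * (h.re : ℂ) - ((‖h‖ : ℂ)) ^ 2 := by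
    linear_combination hξ
  have key2 : (((ξ : ℂ) - (h.re : ℂ)) * m + (ξ : ℂ) * (h.re : ℂ) - ((‖h‖ : ℂ)) ^ 2) *
      ((μ : ℂ) - (h.re : ℂ)) = -((h.im : ℂ)) ^ 2 * (m + (μ : ℂ)) := by
    linear_combination (m + (h.re : ℂ)) * hξ - (m + (μ : ℂ)) * habs
  rw [div_mul_div_comm, div_eq_iff (mul_ne_zero hd1 hd2)]
  apply mul_right_cancel₀ hur
  linear_combination ((h.im : ℂ) ^ 2 * (m + (μ : ℂ))) * key1 +
    (((μ : ℂ) - (h.re : ℂ)) * m + (μ : ℂ) * (h.re : ℂ) - ((‖h‖ : ℂ)) ^ 2) * key2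
end

section
/- Let y : [1, ∞) → ℂ be continuously differentiable with y' ∈ L²[1,∞), y/x ∈ L²[1,∞), and y(x) → 0 as x → ∞. Then |y(1)|² ≤ ‖y'‖²_{L²[1,∞)} + 2‖y(x)/x‖²_{L²[1,∞)}. -/
open MeasureTheory

theorem stmt14 (y : ℝ → ℂ)
    (hy : ContDiffOn ℝ 1 y (Set.Ici 1))
    (hy' : IntegrableOn (fun x => ‖deriv y x‖ ^ 2) (Set.Ioi 1))
    (hyx : IntegrableOn (fun x => ‖y x / (x : ℂ)‖ ^ 2) (Set.Ioi 1))
    (hlim : Filter.Tendsto y Filter.atTop (nhds 0)) :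
    ‖y 1‖ ^ 2 ≤ (∫ x in Set.Ioi (1 : ℝ), ‖deriv y x‖ ^ 2) +
      2 * ∫ x in Set.Ioi (1 : ℝ), ‖y x / (x : ℂ)‖ ^ 2 := by
  set D : ℝ → ℂ := fun x => derivWithin y (Set.Ici 1) x with hDdef
  set g : ℝ → ℝ := fun x => ‖y x‖ ^ 2 / x with hgdef
  set g' : ℝ → ℝ := fun x =>
    (2 * (inner ℝ (y x) (D x)) * x - ‖y x‖ ^ 2) / x ^ 2 with hg'def
  set F : ℝ → ℝ := fun x => ‖deriv y x‖ ^ 2 + 2 * ‖y x / (x : ℂ)‖ ^ 2 with hFdef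
  set F' : ℝ → ℝ := fun x => ‖D x‖ ^ 2 + 2 * ‖y x / (x : ℂ)‖ ^ 2 with hF'def
  -- derivative of y at interior points
  have hDa : ∀ x : ℝ, 1 < x → HasDerivAt y (D x) x := by
    intro x hx
    have h1 : Set.Ici (1:ℝ) ∈ nhds x := Ici_mem_nhds hx
    exact (((hy.differentiableOn one_ne_zero) x (le_of_lt hx)).hasDerivWithinAt).hasDerivAt h1
  -- continuity of D on Ici 1
  have hDc : ContinuousOn D (Set.Ici 1) :=
    hy.continuousOn_derivWithin (uniqueDiffOn_Ici 1) le_rfl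
  have hyc : ContinuousOn y (Set.Ici 1) := hy.continuousOn
  -- derivative of g at interior points
  have hgd : ∀ x : ℝ, 1 < x → HasDerivAt g (g' x) x := by
    intro x hx
    have hx0 : x ≠ 0 := by positivity
    have hyd := hDa x hx
    have hN : HasDerivAt (fun t => ‖y t‖ ^ 2) (2 * (inner ℝ (y x) (D x))) x := by
      have h := (hyd.inner ℝ hyd : HasDerivAt (fun t => (inner ℝ (y t) (y t))) _ x)
      have heq : (fun t => (inner ℝ (y t) (y t))) = fun t => ‖y t‖ ^ 2 := by
        funext t; exact real_inner_self_eq_norm_sq (y t)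
      rw [heq] at h
      refine h.congr_deriv ?_
      rw [real_inner_comm (D x) (y x)]
      ring
    have h := hN.div (hasDerivAt_id x) hx0
    refine h.congr_deriv ?_
    simp only [hg'def, id_eq]
    ring
  -- continuity of g on Ici 1
  have hgc : ContinuousOn g (Set.Ici 1) := by
    apply ContinuousOn.div (hyc.norm.pow 2) continuousOn_id
    intro x hx; exact ne_of_gt (lt_of_lt_of_le zero_lt_one hx)
  -- pointwise bound : -(g' x) ≤ F' x for x ≥ 1
  have hbound : ∀ x : ℝ, 1 ≤ x → -(g' x) ≤ F' x := by
    intro x hx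
    have hx0 : (0:ℝ) < x := lt_of_lt_of_le zero_lt_one hx
    have hx2 : (0:ℝ) < x ^ 2 := by positivity
    set a := ‖y x‖ with ha
    set d := ‖D x‖ with hd
    set i := (inner ℝ (y x) (D x)) with hi
    have hnd : ‖y x / (x : ℂ)‖ = a / x := by
      rw [norm_div, Complex.norm_real, Real.norm_eq_abs, abs_of_pos hx0]
    have hile : |i| ≤ a * d := abs_real_inner_le_norm (y x) (D x)
    have h3 : -i ≤ a * d := by
      have := neg_abs_le i; linarith [abs_le.mp hile]
    have hax : (a / x) ^ 2 * x ^ 2 = a ^ 2 := by field_simp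
    simp only [hF'def, hg'def, hnd]
    rw [← neg_div, div_le_iff₀ hx2]
    nlinarith [sq_nonneg (a - d * x), mul_pos hx0 hx0, mul_nonneg (norm_nonneg (y x)) (norm_nonneg (D x))]
  -- integrability facts
  have hFint : IntegrableOn F (Set.Ioi 1) := by
    exact hy'.add (hyx.const_mul 2)
  have hFnn : ∀ x : ℝ, 0 ≤ F x := by intro x; positivity
  -- main estimate for each b ≥ 1
  have key : ∀ b : ℝ, 1 ≤ b → ‖y 1‖ ^ 2 ≤ g b + ∫ x in Set.Ioi (1:ℝ), F x := by
    intro b hb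
    have hIcc : Set.Icc (1:ℝ) b ⊆ Set.Ici 1 := Set.Icc_subset_Ici_self
    -- FTC
    have hg'c : ContinuousOn g' (Set.Icc 1 b) := by
      apply ContinuousOn.div
      · apply ContinuousOn.sub
        · exact (continuousOn_const.mul (ContinuousOn.inner (hyc.mono hIcc) (hDc.mono hIcc))).mul
            continuousOn_id
        · exact ((hyc.mono hIcc).norm.pow 2)
      · exact (continuousOn_id.pow 2)
      · intro x hx
        have : (0:ℝ) < x := lt_of_lt_of_le zero_lt_one hx.1
        positivity
    have hg'int : IntervalIntegrable g' volume 1 b := by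
      apply ContinuousOn.intervalIntegrable
      rwa [Set.uIcc_of_le hb]
    have hftc : ∫ x in (1:ℝ)..b, g' x = g b - g 1 := by
      apply intervalIntegral.integral_eq_sub_of_hasDeriv_right_of_le hb
        (hgc.mono hIcc) _ hg'int
      intro x hx
      exact (hgd x hx.1).hasDerivWithinAt
    have hF'c : ContinuousOn F' (Set.Icc 1 b) := by
      apply ContinuousOn.add
      · exact ((hDc.mono hIcc).norm.pow 2)
      · apply continuousOn_const.mul
        apply ContinuousOn.pow
        apply ContinuousOn.norm
        apply ContinuousOn.div (hyc.mono hIcc) (Complex.continuous_ofReal.continuousOn)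
        intro x hx
        have : (0:ℝ) < x := lt_of_lt_of_le zero_lt_one hx.1
        simp [ne_of_gt this]
    have hF'int : IntervalIntegrable F' volume 1 b := by
      apply ContinuousOn.intervalIntegrable
      rwa [Set.uIcc_of_le hb]
    have hmono : ∫ x in (1:ℝ)..b, -(g' x) ≤ ∫ x in (1:ℝ)..b, F' x := by
      apply intervalIntegral.integral_mono_on hb hg'int.neg hF'int
      intro x hx
      exact hbound x hx.1
    have hEq : ∫ x in (1:ℝ)..b, F' x = ∫ x in Set.Ioc (1:ℝ) b, F x := by
      rw [intervalIntegral.integral_of_le hb]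
      apply setIntegral_congr_fun measurableSet_Ioc
      intro x hx
      have : deriv y x = D x := (hDa x hx.1).deriv
      simp only [hF'def, hFdef, this]
    have hle2 : ∫ x in Set.Ioc (1:ℝ) b, F x ≤ ∫ x in Set.Ioi (1:ℝ), F x := by
      apply setIntegral_mono_set hFint
      · exact Filter.Eventually.of_forall hFnn
      · exact Filter.Eventually.of_forall (fun x hx => Set.Ioc_subset_Ioi_self hx)
    have hneg : ∫ x in (1:ℝ)..b, -(g' x) = -(g b - g 1) := by
      rw [intervalIntegral.integral_neg, hftc]
    have hg1 : g 1 = ‖y 1‖ ^ 2 := by simp [hgdef]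
    have := hmono
    rw [hneg, hEq] at this
    linarith [hle2]
  -- take limit b → ∞
  have hgtend : Filter.Tendsto g Filter.atTop (nhds 0) := by
    have h1 : Filter.Tendsto (fun x => ‖y x‖ ^ 2) Filter.atTop (nhds 0) := by
      have := (hlim.norm).pow 2
      simpa using this
    exact h1.div_atTop Filter.tendsto_id
  have hlim2 : Filter.Tendsto (fun b => g b + ∫ x in Set.Ioi (1:ℝ), F x)
      Filter.atTop (nhds (∫ x in Set.Ioi (1:ℝ), F x)) := by
    simpa using hgtend.add tendsto_const_nhds
  have hfinal : ‖y 1‖ ^ 2 ≤ ∫ x in Set.Ioi (1:ℝ), F x := by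
    apply ge_of_tendsto hlim2
    filter_upwards [Filter.eventually_ge_atTop (1:ℝ)] with b hb
    exact key b hb
  have hsplit : ∫ x in Set.Ioi (1:ℝ), F x =
      (∫ x in Set.Ioi (1 : ℝ), ‖deriv y x‖ ^ 2) +
      2 * ∫ x in Set.Ioi (1 : ℝ), ‖y x / (x : ℂ)‖ ^ 2 := by
    rw [hFdef]
    rw [integral_add hy' (hyx.const_mul 2), integral_const_mul]
  linarith [hfinal, hsplit.le, hsplit.ge]
end
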